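/- Let k ≥ 1 and n ≥ 1 be natural numbers, let G_n = {(j₁/n, …, j_k/n) : jᵢ ∈ {0,1,…,n}} ⊂ [0,1]^k be the uniform grid with spacing 1/n, let ω be a modulus of continuity, and let R ≥ ω(√k/(2n)). Then for every reconstruction map g : (G_n → ℝ) → ([0,1]^k → ℝ), the worst-case uniform reconstruction error over the class U = {x ∈ X_ω : sup_t |x(t)| ≤ R} satisfies sup_{x ∈ U} sup_{τ ∈ [0,1]^k} |x(τ) − g(x|_{G_n})(τ)| ≥ ω(√k/(2n)). -/

import Mathlib

noncomputable section

/-- The unit cube $[0,1]^k$ in $\mathbb{R}^k$ with the Euclidean norm. -/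
def cube (k : ℕ) : Set (EuclideanSpace ℝ (Fin k)) :=
  {t | ∀ i, t i ∈ Set.Icc (0:ℝ) 1}

/-- The uniform grid with spacing $1/n$ in the unit cube. -/
def grid (k n : ℕ) : Set (EuclideanSpace ℝ (Fin k)) :=
  {p | ∀ i, ∃ j : ℕ, j ≤ n ∧ p i = (j : ℝ) / n}

/-- A modulus of continuity: `ω : [0,∞) → [0,∞)`, `ω 0 = 0`, nondecreasing,
continuous and subadditive (all conditions on `[0,∞)`). -/
def IsModulus (ω : ℝ → ℝ) : Prop :=
  ω 0 = 0 ∧ (∀ h, 0 ≤ h → 0 ≤ ω h) ∧ (∀ a b, 0 ≤ a → a ≤ b → ω a ≤ ω b) ∧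
  ContinuousOn ω (Set.Ici 0) ∧ ∀ a b, 0 ≤ a → 0 ≤ b → ω (a + b) ≤ ω a + ω b

/-- Membership in the class `X_ω` of functions on the unit cube admitting `ω`
as a modulus of continuity (w.r.t. the Euclidean norm). -/
def MemXomega (k : ℕ) (ω : ℝ → ℝ) (x : EuclideanSpace ℝ (Fin k) → ℝ) : Prop :=
  ∀ t ∈ cube k, ∀ s ∈ cube k, |x t - x s| ≤ ω (dist t s)

/-- (Lower bound.) For every reconstruction map `g` from grid
values on `G_n`, the worst-case uniform reconstruction error over the bounded
class `U = {x ∈ X_ω : sup |x| ≤ R}` (where `R ≥ ω(√k/(2n))`) is at least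
`ω(√k/(2n))`. -/
theorem reconstruction_error_lower_bound
    (k n : ℕ) (hk : 1 ≤ k) (hn : 1 ≤ n)
    (ω : ℝ → ℝ) (hω : IsModulus ω)
    (R : ℝ) (hR : ω (Real.sqrt k / (2 * n)) ≤ R) :
    ∀ g : (↥(grid k n) → ℝ) → (EuclideanSpace ℝ (Fin k) → ℝ),
      ENNReal.ofReal (ω (Real.sqrt k / (2 * n))) ≤
        ⨆ x : {x : EuclideanSpace ℝ (Fin k) → ℝ //
                MemXomega k ω x ∧ ∀ t ∈ cube k, |x t| ≤ R},
        ⨆ τ : cube k,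
          ENNReal.ofReal |x.1 τ.1 - g (fun p => x.1 p.1) τ.1| := by
  intro g
  obtain ⟨hω0, hωnn, hωmono, hωcont, hωsub⟩ := hω
  have hn0 : (0:ℝ) < n := by exact_mod_cast hn
  set δ : ℝ := Real.sqrt k / (2 * n) with hδdef
  have hδ0 : 0 ≤ δ := by positivity
  have hωδ0 : 0 ≤ ω δ := hωnn δ hδ0
  set τ : EuclideanSpace ℝ (Fin k) := WithLp.toLp 2 (fun _ => (1 / (2 * n) : ℝ)) with hτdef
  have hτcube : τ ∈ cube k := by
    intro i
    constructor
    · positivity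
    · rw [div_le_one (by positivity)]
      have h1 : (1:ℝ) ≤ n := by exact_mod_cast hn
      linarith
  -- every grid point is at distance at least δ from τ
  have hdistτ : ∀ p ∈ grid k n, δ ≤ dist p τ := by
    intro p hp
    rw [EuclideanSpace.dist_eq]
    have hterm : ∀ i : Fin k, (1 / (2 * n) : ℝ) ^ 2 ≤ dist (p i) (τ i) ^ 2 := by
      intro i
      obtain ⟨j, hj, hpi⟩ := hp i
      have : τ i = 1 / (2 * n) := rfl
      rw [Real.dist_eq, hpi, this]
      rcases Nat.eq_zero_or_pos j with h0 | h1
      · subst h0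
        simp only [Nat.cast_zero, zero_div, zero_sub, abs_neg]
        rw [abs_of_nonneg (by positivity)]
      · have hj1 : (1:ℝ) ≤ j := by exact_mod_cast h1
        have hge : 1 / (2 * n) ≤ (j : ℝ) / n - 1 / (2 * n) := by
          rw [le_sub_iff_add_le]
          rw [← add_div, div_le_div_iff₀ (by positivity) (by positivity)]
          nlinarith
        have habs : |(j : ℝ) / n - 1 / (2 * n)| = (j : ℝ) / n - 1 / (2 * n) :=
          abs_of_nonneg (le_trans (by positivity) hge)
        rw [habs]
        have h2 : (0:ℝ) ≤ 1 / (2*n) := by positivity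
        nlinarith
    have hsum : (k : ℝ) * (1 / (2 * n)) ^ 2 ≤ ∑ i, dist (p i) (τ i) ^ 2 := by
      calc (k : ℝ) * (1 / (2 * n)) ^ 2 = ∑ _i : Fin k, (1 / (2 * n) : ℝ) ^ 2 := by
            simp [Finset.sum_const, mul_comm]
        _ ≤ ∑ i, dist (p i) (τ i) ^ 2 := Finset.sum_le_sum fun i _ => hterm i
    have : δ = Real.sqrt ((k : ℝ) * (1 / (2 * n)) ^ 2) := by
      rw [Real.sqrt_mul (by positivity), Real.sqrt_sq (by positivity)]
      rw [hδdef]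
      field_simp
    rw [this]
    exact Real.sqrt_le_sqrt hsum
  -- key subadditivity consequence
  have hkey : ∀ a b : ℝ, 0 ≤ a → 0 ≤ b → ω a - ω b ≤ ω |a - b| := by
    intro a b ha hb
    rcases le_total a b with h | h
    · have : ω a ≤ ω b := hωmono a b ha h
      have : ω a - ω b ≤ 0 := by linarith
      exact this.trans (hωnn _ (abs_nonneg _))
    · have : ω a ≤ ω b + ω (a - b) := by
        have := hωsub b (a - b) hb (by linarith)
        simpa [add_sub_cancel] using this
      rw [abs_of_nonneg (by linarith)]
      linarith
  -- the bump function
  set f : EuclideanSpace ℝ (Fin k) → ℝ := fun t => max (ω δ - ω (dist t τ)) 0 with hfdef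
  have hfbound : ∀ t, |f t| ≤ ω δ := by
    intro t
    rw [abs_of_nonneg (le_max_right _ _)]
    apply max_le _ hωδ0
    have := hωnn (dist t τ) dist_nonneg
    linarith
  have hfX : MemXomega k ω f := by
    intro t _ s _
    have h1 : |f t - f s| ≤ |(ω δ - ω (dist t τ)) - (ω δ - ω (dist s τ))| :=
      abs_max_sub_max_le_abs _ _ _
    have h2 : |(ω δ - ω (dist t τ)) - (ω δ - ω (dist s τ))| = |ω (dist s τ) - ω (dist t τ)| := by
      congr 1
      ring
    have h3 : |ω (dist s τ) - ω (dist t τ)| ≤ ω (dist t s) := by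
      have hd : |dist s τ - dist t τ| ≤ dist t s := by
        rw [abs_sub_comm]
        exact abs_dist_sub_le t s τ
      rcases le_total (ω (dist t τ)) (ω (dist s τ)) with h | h
      · rw [abs_of_nonneg (by linarith)]
        calc ω (dist s τ) - ω (dist t τ) ≤ ω |dist s τ - dist t τ| :=
              hkey _ _ dist_nonneg dist_nonneg
          _ ≤ ω (dist t s) := hωmono _ _ (abs_nonneg _) hd
      · rw [abs_of_nonpos (by linarith), neg_sub]
        calc ω (dist t τ) - ω (dist s τ) ≤ ω |dist t τ - dist s τ| :=
              hkey _ _ dist_nonneg dist_nonneg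
          _ ≤ ω (dist t s) := hωmono _ _ (abs_nonneg _) (abs_dist_sub_le t s τ)
    calc |f t - f s| ≤ _ := h1
      _ = _ := h2
      _ ≤ _ := h3
  have hnegX : MemXomega k ω (fun t => -f t) := by
    intro t ht s hs
    rw [show (-f t) - (-f s) = -(f t - f s) by ring, abs_neg]
    exact hfX t ht s hs
  -- f vanishes on the grid
  have hfgrid : ∀ p : ↥(grid k n), f p.1 = 0 := by
    intro p
    have : ω δ ≤ ω (dist p.1 τ) := hωmono δ _ hδ0 (hdistτ p.1 p.2)
    exact max_eq_right (by linarith)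
  have hfτ : f τ = ω δ := by
    have : dist τ τ = 0 := dist_self τ
    simp only [hfdef, this, hω0, sub_zero]
    exact max_eq_left hωδ0
  -- grid restrictions coincide
  have hgeq : g (fun p => f p.1) = g (fun p => (fun t => -f t) p.1) := by
    have h : (fun p : ↥(grid k n) => f p.1) = (fun p => (fun t => -f t) p.1) := by
      funext p
      simp [hfgrid p]
    rw [h]
  set c : ℝ := g (fun p => f p.1) τ with hcdef
  -- assemble
  rcases le_total 0 c with hc | hc
  · -- use -f
    refine le_trans ?_ (le_iSup _ (⟨fun t => -f t, hnegX, fun t ht => by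
        simpa using (hfbound t).trans hR⟩ :
      {x : EuclideanSpace ℝ (Fin k) → ℝ // MemXomega k ω x ∧ ∀ t ∈ cube k, |x t| ≤ R}))
    refine le_trans ?_ (le_iSup _ (⟨τ, hτcube⟩ : cube k))
    apply ENNReal.ofReal_le_ofReal
    simp only
    rw [← hgeq, ← hcdef, hfτ]
    rw [abs_of_nonpos (by linarith)]
    linarith
  · -- use f
    refine le_trans ?_ (le_iSup _ (⟨f, hfX, fun t ht => (hfbound t).trans hR⟩ :
      {x : EuclideanSpace ℝ (Fin k) → ℝ // MemXomega k ω x ∧ ∀ t ∈ cube k, |x t| ≤ R}))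
    refine le_trans ?_ (le_iSup _ (⟨τ, hτcube⟩ : cube k))
    apply ENNReal.ofReal_le_ofReal
    simp only
    rw [← hcdef, hfτ]
    rw [abs_of_nonneg (by linarith)]
    linarith
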